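/- If 0 ≤ μ ≤ μ', then for every real α > 0: H_α(N(μ, 1)‖N(0, 1)) ≤ H_α(N(μ', 1)‖N(0, 1)); i.e. the hockey-stick divergence between unit-variance Gaussians is nondecreasing in the distance between their means. -/

import Mathlib

open MeasureTheory ProbabilityTheory Real

/-- Hockey-stick divergence `H_α(P‖Q) = sup_E (P(E) − α·Q(E))`. -/
noncomputable def hockeyStick {Ω : Type*} [MeasurableSpace Ω] (α : ℝ) (P Q : Measure Ω) : ℝ :=
  ⨆ E : {E : Set Ω // MeasurableSet E}, ((P E).toReal - α * (Q E).toReal)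

namespace HSAux

noncomputable def q : ℝ → ℝ := gaussianPDFReal 0 1

lemma q_cont : Continuous q := by
  unfold q gaussianPDFReal
  fun_prop

lemma q_pos (x : ℝ) : 0 < q x := gaussianPDFReal_pos 0 1 x one_ne_zero

lemma q_int : Integrable q := integrable_gaussianPDFReal 0 1

/-- measure of a set as an integral of the density -/
lemma meas_toReal (m : ℝ) (E : Set ℝ) :
    ((gaussianReal m 1 : Measure ℝ) E).toReal = ∫ x in E, gaussianPDFReal m 1 x := by
  rw [gaussianReal_apply_eq_integral m one_ne_zero E,
    ENNReal.toReal_ofReal (integral_nonneg fun x => gaussianPDFReal_nonneg _ _ _)]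

lemma diff_eq_integral (m α : ℝ) (E : Set ℝ) :
    ((gaussianReal m 1 : Measure ℝ) E).toReal - α * ((gaussianReal 0 1 : Measure ℝ) E).toReal
      = ∫ x in E, (gaussianPDFReal m 1 x - α * q x) := by
  rw [meas_toReal, meas_toReal,
    show (fun x => gaussianPDFReal m 1 x - α * q x)
      = fun x => gaussianPDFReal m 1 x - α * gaussianPDFReal 0 1 x from rfl,
    integral_sub ((integrable_gaussianPDFReal m 1).restrict)
    (((integrable_gaussianPDFReal 0 1).restrict).const_mul α), integral_const_mul]

noncomputable def Ψ (t : ℝ) : ℝ := ((gaussianReal 0 1 : Measure ℝ) (Set.Ici t)).toReal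

lemma psi_sub {a b : ℝ} (hab : a ≤ b) : Ψ a = (∫ x in a..b, q x) + Ψ b := by
  have hset : Set.Ici a = Set.Ico a b ∪ Set.Ici b := (Set.Ico_union_Ici_eq_Ici hab).symm
  have hdisj : Disjoint (Set.Ico a b) (Set.Ici b) := by
    refine Set.disjoint_left.mpr fun x hx hx' => ?_
    exact absurd hx.2 (not_lt.mpr hx')
  have hmeas : ((gaussianReal 0 1 : Measure ℝ) (Set.Ici a))
      = (gaussianReal 0 1 : Measure ℝ) (Set.Ico a b) + (gaussianReal 0 1 : Measure ℝ) (Set.Ici b) := by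
    rw [hset, measure_union hdisj measurableSet_Ici]
  have h1 : Ψ a = ((gaussianReal 0 1 : Measure ℝ) (Set.Ico a b)).toReal + Ψ b := by
    unfold Ψ
    rw [hmeas, ENNReal.toReal_add (measure_ne_top _ _) (measure_ne_top _ _)]
  rw [h1]
  congr 1
  rw [meas_toReal, intervalIntegral.integral_of_le hab, integral_Ico_eq_integral_Ioo,
    integral_Ioc_eq_integral_Ioo]
  rfl

lemma psi_eq (t : ℝ) : Ψ t = Ψ 0 - ∫ x in (0:ℝ)..t, q x := by
  rcases le_total 0 t with h | h
  · have := psi_sub h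
    linarith
  · have := psi_sub h
    rw [intervalIntegral.integral_symm] at this
    linarith

lemma psi_hasDeriv (t : ℝ) : HasDerivAt Ψ (-(q t)) t := by
  have hF : HasDerivAt (fun u => ∫ x in (0:ℝ)..u, q x) (q t) t := by
    refine intervalIntegral.integral_hasDerivAt_right q_int.intervalIntegrable
      ?_ q_cont.continuousAt
    exact q_cont.stronglyMeasurable.stronglyMeasurableAtFilter
  have : HasDerivAt (fun u => Ψ 0 - ∫ x in (0:ℝ)..u, q x) (0 - q t) t :=
    (hasDerivAt_const t (Ψ 0)).sub hF
  have heq : Ψ = fun u => Ψ 0 - ∫ x in (0:ℝ)..u, q x := funext psi_eq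
  rw [heq]
  simpa using this


lemma pos_set_eq (α c m : ℝ) (hm : 0 < m) (hc : rexp c = α) :
    {x : ℝ | 0 ≤ gaussianPDFReal m 1 x - α * q x} = Set.Ici (c * m⁻¹ + m / 2) := by
  ext x
  simp only [Set.mem_setOf_eq, Set.mem_Ici, sub_nonneg]
  unfold q gaussianPDFReal
  simp only [NNReal.coe_one, mul_one, sub_zero]
  rw [← hc, mul_comm (rexp c), mul_assoc, ← Real.exp_add]
  have hk : (0:ℝ) < (√(2 * π))⁻¹ := by positivity
  rw [mul_le_mul_iff_of_pos_left hk, Real.exp_le_exp]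
  constructor
  · intro h
    rw [show c * m⁻¹ + m / 2 = (c + m ^ 2 / 2) / m by field_simp, div_le_iff₀ hm]
    nlinarith
  · intro h
    rw [show c * m⁻¹ + m / 2 = (c + m ^ 2 / 2) / m by field_simp, div_le_iff₀ hm] at h
    nlinarith

lemma set_int_le (α c m : ℝ) (hm : 0 < m) (hc : rexp c = α) (E : Set ℝ)
    (hE : MeasurableSet E) :
    ∫ x in E, (gaussianPDFReal m 1 x - α * q x)
      ≤ ∫ x in Set.Ici (c * m⁻¹ + m / 2), (gaussianPDFReal m 1 x - α * q x) := by
  set f := fun x => gaussianPDFReal m 1 x - α * q x with hf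
  have hfint : Integrable f := (integrable_gaussianPDFReal m 1).sub (q_int.const_mul α)
  rw [← integral_indicator hE, ← integral_indicator measurableSet_Ici]
  refine integral_mono (hfint.indicator hE) (hfint.indicator measurableSet_Ici) fun x => ?_
  have hset := pos_set_eq α c m hm hc
  by_cases hx : x ∈ Set.Ici (c * m⁻¹ + m / 2)
  · have hfx : 0 ≤ f x := by
      have : x ∈ {x : ℝ | 0 ≤ gaussianPDFReal m 1 x - α * q x} := hset ▸ hx
      exact this
    rw [Set.indicator_of_mem hx]
    by_cases hxE : x ∈ E
    · rw [Set.indicator_of_mem hxE]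
    · rw [Set.indicator_of_notMem hxE]; exact hfx
  · have hfx : f x ≤ 0 := by
      by_contra h
      push_neg at h
      exact hx (hset ▸ Set.mem_setOf_eq ▸ (le_of_lt h))
    rw [Set.indicator_of_notMem hx]
    by_cases hxE : x ∈ E
    · rw [Set.indicator_of_mem hxE]; exact hfx
    · rw [Set.indicator_of_notMem hxE]

lemma ici_apply (m t : ℝ) :
    ((gaussianReal m 1 : Measure ℝ) (Set.Ici t)).toReal = Ψ (t - m) := by
  have hmap : (gaussianReal 0 1 : Measure ℝ).map (· + m) = gaussianReal m 1 := by
    rw [gaussianReal_map_add_const]; norm_num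
  rw [← hmap, Measure.map_apply (measurable_add_const m) measurableSet_Ici]
  unfold Ψ
  congr 2
  ext x
  simp [Set.mem_Ici, sub_le_iff_le_add]

noncomputable def G (α c m : ℝ) : ℝ := Ψ (c * m⁻¹ - m / 2) - α * Ψ (c * m⁻¹ + m / 2)

lemma alpha_q (α c : ℝ) (hc : rexp c = α) {m : ℝ} (hm : m ≠ 0) :
    α * q (c * m⁻¹ + m / 2) = q (c * m⁻¹ - m / 2) := by
  unfold q gaussianPDFReal
  simp only [NNReal.coe_one, mul_one, sub_zero]
  rw [← hc, mul_comm (rexp c), mul_assoc, ← Real.exp_add]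
  congr 1
  rw [Real.exp_eq_exp]
  field_simp
  ring

lemma G_deriv (α c : ℝ) (hc : rexp c = α) {m : ℝ} (hm : 0 < m) :
    HasDerivAt (G α c) (q (c * m⁻¹ - m / 2)) m := by
  have hm' : m ≠ 0 := ne_of_gt hm
  have h1 : HasDerivAt (fun x : ℝ => c * x⁻¹ - x / 2) (c * -(m ^ 2)⁻¹ - 1 / 2) m :=
    ((hasDerivAt_inv hm').const_mul c).sub ((hasDerivAt_id m).div_const 2)
  have h2 : HasDerivAt (fun x : ℝ => c * x⁻¹ + x / 2) (c * -(m ^ 2)⁻¹ + 1 / 2) m :=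
    ((hasDerivAt_inv hm').const_mul c).add ((hasDerivAt_id m).div_const 2)
  have hu : HasDerivAt (fun x : ℝ => Ψ (c * x⁻¹ - x / 2))
      (-(q (c * m⁻¹ - m / 2)) * (c * -(m ^ 2)⁻¹ - 1 / 2)) m :=
    HasDerivAt.comp (h₂ := Ψ) m (psi_hasDeriv (c * m⁻¹ - m / 2)) h1
  have hv : HasDerivAt (fun x : ℝ => Ψ (c * x⁻¹ + x / 2))
      (-(q (c * m⁻¹ + m / 2)) * (c * -(m ^ 2)⁻¹ + 1 / 2)) m :=
    HasDerivAt.comp (h₂ := Ψ) m (psi_hasDeriv (c * m⁻¹ + m / 2)) h2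
  have total : HasDerivAt (G α c)
      (-(q (c * m⁻¹ - m / 2)) * (c * -(m ^ 2)⁻¹ - 1 / 2)
        - α * (-(q (c * m⁻¹ + m / 2)) * (c * -(m ^ 2)⁻¹ + 1 / 2))) m :=
    hu.sub (hv.const_mul α)
  have hαq : α * q (c * m⁻¹ + m / 2) = q (c * m⁻¹ - m / 2) := alpha_q α c hc hm'
  have hD : -(q (c * m⁻¹ - m / 2)) * (c * -(m ^ 2)⁻¹ - 1 / 2)
        - α * (-(q (c * m⁻¹ + m / 2)) * (c * -(m ^ 2)⁻¹ + 1 / 2))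
      = q (c * m⁻¹ - m / 2) := by
    linear_combination (c * -(m ^ 2)⁻¹ + 1 / 2) * hαq
  exact hD ▸ total

lemma G_mono (α c : ℝ) (hc : rexp c = α) : StrictMonoOn (G α c) (Set.Ioi 0) := by
  refine strictMonoOn_of_deriv_pos (convex_Ioi 0) ?_ ?_
  · exact fun x hx => ((G_deriv α c hc hx).continuousAt).continuousWithinAt
  · intro x hx
    rw [interior_Ioi] at hx
    rw [(G_deriv α c hc hx).deriv]
    exact q_pos _

lemma term_eq_G (α c m : ℝ) :
    ((gaussianReal m 1 : Measure ℝ) (Set.Ici (c * m⁻¹ + m / 2))).toReal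
        - α * ((gaussianReal 0 1 : Measure ℝ) (Set.Ici (c * m⁻¹ + m / 2))).toReal
      = G α c m := by
  rw [ici_apply m _, show c * m⁻¹ + m / 2 - m = c * m⁻¹ - m / 2 by ring]
  rfl

end HSAux

/-- The hockey-stick divergence between unit-variance Gaussians is nondecreasing in the
distance between their means. -/
theorem hockeyStick_gaussian_mono (μ μ' : ℝ) (hμ : 0 ≤ μ) (hμμ' : μ ≤ μ') :
    ∀ α : ℝ, 0 < α →
      hockeyStick α (gaussianReal μ 1) (gaussianReal 0 1)
        ≤ hockeyStick α (gaussianReal μ' 1) (gaussianReal 0 1) := by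
  intro α hα
  have hc : rexp (Real.log α) = α := Real.exp_log hα
  set c := Real.log α
  haveI : Nonempty {E : Set ℝ // MeasurableSet E} := ⟨⟨∅, MeasurableSet.empty⟩⟩
  have hbdd : BddAbove (Set.range fun E : {E : Set ℝ // MeasurableSet E} =>
      (((gaussianReal μ' 1 : Measure ℝ) E).toReal
        - α * ((gaussianReal 0 1 : Measure ℝ) E).toReal)) := by
    refine ⟨1, ?_⟩
    rintro x ⟨E, rfl⟩
    have h1 : ((gaussianReal μ' 1 : Measure ℝ) E).toReal ≤ 1 := by
      have h := prob_le_one (μ := gaussianReal μ' 1) (s := (E : Set ℝ))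
      have := ENNReal.toReal_mono ENNReal.one_ne_top h
      simpa using this
    have h2 : 0 ≤ α * ((gaussianReal 0 1 : Measure ℝ) E).toReal := by positivity
    simp only
    linarith
  have hle : ∀ E : Set ℝ, MeasurableSet E →
      ((gaussianReal μ 1 : Measure ℝ) E).toReal - α * ((gaussianReal 0 1 : Measure ℝ) E).toReal
        ≤ hockeyStick α (gaussianReal μ' 1) (gaussianReal 0 1) := by
    intro E hE
    rcases (hμ.trans hμμ').eq_or_lt with hμ'0 | hμ'pos
    · -- μ' = 0 hence μ = 0
      have hμ0 : μ = μ' := le_antisymm hμμ' (hμ'0 ▸ hμ)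
      rw [hμ0]
      exact le_ciSup hbdd ⟨E, hE⟩
    · have hG' : HSAux.G α c μ' ≤ hockeyStick α (gaussianReal μ' 1) (gaussianReal 0 1) := by
        have h := le_ciSup hbdd ⟨Set.Ici (c * μ'⁻¹ + μ' / 2), measurableSet_Ici⟩
        rw [show (((gaussianReal μ' 1 : Measure ℝ) (Set.Ici (c * μ'⁻¹ + μ' / 2))).toReal
            - α * ((gaussianReal 0 1 : Measure ℝ) (Set.Ici (c * μ'⁻¹ + μ' / 2))).toReal)
            = HSAux.G α c μ' from HSAux.term_eq_G α c μ'] at h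
        exact h
      rcases hμ.eq_or_lt with hμ0 | hμpos
      · -- μ = 0
        rw [← hμ0]
        set x := ((gaussianReal 0 1 : Measure ℝ) E).toReal with hx
        have hx0 : 0 ≤ x := ENNReal.toReal_nonneg
        have hx1 : x ≤ 1 := by
          have h := prob_le_one (μ := gaussianReal 0 1) (s := E)
          have := ENNReal.toReal_mono ENNReal.one_ne_top h
          simpa using this
        by_cases hα1 : α ≤ 1
        · have hterm : x - α * x ≤ 1 - α * 1 := by nlinarith
          have huniv := le_ciSup hbdd ⟨Set.univ, MeasurableSet.univ⟩
          simp only [measure_univ, ENNReal.toReal_one] at huniv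
          calc x - α * x ≤ 1 - α * 1 := hterm
            _ ≤ _ := huniv
        · push_neg at hα1
          have hterm : x - α * x ≤ 0 := by nlinarith
          have hempty := le_ciSup hbdd ⟨(∅ : Set ℝ), MeasurableSet.empty⟩
          simp only [measure_empty, ENNReal.toReal_zero, mul_zero, sub_zero] at hempty
          exact hterm.trans hempty
      · -- 0 < μ
        calc ((gaussianReal μ 1 : Measure ℝ) E).toReal
              - α * ((gaussianReal 0 1 : Measure ℝ) E).toReal
            = ∫ x in E, (gaussianPDFReal μ 1 x - α * HSAux.q x) := HSAux.diff_eq_integral μ α E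
          _ ≤ ∫ x in Set.Ici (c * μ⁻¹ + μ / 2), (gaussianPDFReal μ 1 x - α * HSAux.q x) :=
              HSAux.set_int_le α c μ hμpos hc E hE
          _ = ((gaussianReal μ 1 : Measure ℝ) (Set.Ici (c * μ⁻¹ + μ / 2))).toReal
              - α * ((gaussianReal 0 1 : Measure ℝ) (Set.Ici (c * μ⁻¹ + μ / 2))).toReal :=
              (HSAux.diff_eq_integral μ α _).symm
          _ = HSAux.G α c μ := HSAux.term_eq_G α c μ
          _ ≤ HSAux.G α c μ' := ((HSAux.G_mono α c hc).monotoneOn) hμpos hμ'pos hμμ'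
          _ ≤ _ := hG'
  exact ciSup_le fun E => hle E.1 E.2
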